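/- Let n ≥ 2 be even, let P_{2n} be the path graph with vertex set {1,…,2n} and edges (i,i+1), and let C be the configuration with C(i) = n+i for 1 ≤ i ≤ n and C(i) = i−n for n+1 ≤ i ≤ 2n (so d_max = n). Then every sequence of matchings solving the instance (P_{2n}, C) has length at least 2n−1; consequently the stretch factor of the lower bound d_max on line graphs is at least 2 − 1/n. -/

import Mathlib

/-- A matching of the graph `G`, encoded as an involution of the vertex set that
moves vertices only along edges of `G`. -/
def IsMatchingPerm {V : Type*} (G : SimpleGraph V) (m : V → V) : Prop :=
  Function.Involutive m ∧ ∀ v, m v = v ∨ G.Adj v (m v)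

/-- The configuration obtained from `C` by applying the sequence of matchings
`ms = [M₁, …, M_k]` (with `M₁` applied first):  `M_k ⋯ M₁ C = C ∘ m₁ ∘ ⋯ ∘ m_k`,
where `(M C)(v) = C (m v)`. -/
def routeSeq {V : Type*} (C : V → V) (ms : List (V → V)) : V → V :=
  C ∘ ms.foldr (· ∘ ·) id

/-- The sequence of matchings `ms = (M₁, …, M_k)` solves the instance `(G, C)`,
i.e. `M_k ⋯ M₁ C = Id`. -/
def Solves {V : Type*} (G : SimpleGraph V) (C : V → V) (ms : List (V → V)) : Prop :=
  (∀ m ∈ ms, IsMatchingPerm G m) ∧ routeSeq C ms = id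

/-- The path graph `P_n` on vertices `{0, …, n-1}` (representing `{1, …, n}`),
with edges `(i, i+1)`. -/
def pathGraph (n : ℕ) : SimpleGraph (Fin n) :=
  SimpleGraph.fromRel fun i j => i.val + 1 = j.val

def gs {V : Type*} (l : List (V → V)) : V → V := l.foldr (· ∘ ·) id

lemma gs_cons {V : Type*} (m : V → V) (l : List (V → V)) : gs (m :: l) = m ∘ gs l := rfl

lemma gs_append {V : Type*} (l₁ l₂ : List (V → V)) : gs (l₁ ++ l₂) = gs l₁ ∘ gs l₂ := by
  induction l₁ with
  | nil => rfl
  | cons m l ih => simp [gs_cons, List.cons_append, ih, Function.comp_assoc]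

lemma gs_bij {V : Type*} (l : List (V → V)) (h : ∀ m ∈ l, Function.Involutive m) :
    Function.Bijective (gs l) := by
  induction l with
  | nil => exact Function.bijective_id
  | cons m l ih =>
    rw [gs_cons]
    exact ((h m List.mem_cons_self).bijective).comp
      (ih fun m' hm' => h m' (List.mem_cons_of_mem _ hm'))

lemma gs_foldl {V : Type*} (l : List (V → V)) (h : ∀ m ∈ l, Function.Involutive m)
    (a : V → V) (v : V) :
    gs l ((l.foldl (fun x m => m ∘ x) a) v) = a v := by
  induction l generalizing a with
  | nil => rfl
  | cons m l ih =>
    have := ih (fun m' hm' => h m' (List.mem_cons_of_mem _ hm')) (m ∘ a)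
    simp only [List.foldl_cons, gs_cons, Function.comp_apply] at *
    rw [this]
    exact h m List.mem_cons_self (a v)

lemma foldl_gs {V : Type*} (l : List (V → V)) (h : ∀ m ∈ l, Function.Involutive m)
    (v : V) : (l.foldl (fun x m => m ∘ x) id) (gs l v) = v := by
  apply (gs_bij l h).injective
  exact gs_foldl l h id (gs l v)

lemma foldl_lip {N : ℕ} (l : List (Fin N → Fin N))
    (hl : ∀ m ∈ l, ∀ v : Fin N, (m v).val ≤ v.val + 1 ∧ v.val ≤ (m v).val + 1)
    (a : Fin N → Fin N) (v : Fin N) :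
    ((l.foldl (fun x m => m ∘ x) a) v).val ≤ (a v).val + l.length ∧
      (a v).val ≤ ((l.foldl (fun x m => m ∘ x) a) v).val + l.length := by
  induction l generalizing a with
  | nil => simp
  | cons m l ih =>
    have h1 := hl m List.mem_cons_self (a v)
    have h2 := ih (fun m' hm' => hl m' (List.mem_cons_of_mem _ hm')) (m ∘ a)
    simp only [List.foldl_cons, Function.comp_apply, List.length_cons] at *
    omega

/-- on the path `P_{2n}` with `n ≥ 2` even, the configuration
`C(i) = n + i` for `1 ≤ i ≤ n` and `C(i) = i - n` for `n+1 ≤ i ≤ 2n` (0-indexed below)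
requires at least `2n - 1` matchings in every solution. -/
theorem stmt_7 (n : ℕ) (hn : 2 ≤ n) (heven : Even n)
    (ms : List (Fin (2 * n) → Fin (2 * n)))
    (hms : Solves (pathGraph (2 * n))
      (fun x : Fin (2 * n) =>
        if h : x.val < n then (⟨x.val + n, by omega⟩ : Fin (2 * n))
        else ⟨x.val - n, by have := x.isLt; omega⟩) ms) :
    2 * n - 1 ≤ ms.length := by
  set C : Fin (2 * n) → Fin (2 * n) := fun x : Fin (2 * n) =>
        if h : x.val < n then (⟨x.val + n, by omega⟩ : Fin (2 * n))
        else ⟨x.val - n, by have := x.isLt; omega⟩ with hCdef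
  obtain ⟨hmatch, hsolve⟩ := hms
  set L := ms.length with hL
  have hn0 : 0 < 2 * n := by omega
  have hinv : ∀ m ∈ ms, Function.Involutive m := fun m hm => (hmatch m hm).1
  have hlip : ∀ m ∈ ms, ∀ v : Fin (2 * n),
      (m v).val ≤ v.val + 1 ∧ v.val ≤ (m v).val + 1 := by
    intro m hm v
    rcases (hmatch m hm).2 v with h | h
    · rw [h]; omega
    · rw [pathGraph, SimpleGraph.fromRel_adj] at h
      rcases h.2 with h' | h' <;> omega
  have hC1 : ∀ x : Fin (2 * n), x.val < n → (C x).val = x.val + n := by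
    intro x hx; simp only [hCdef, dif_pos hx]
  have hsol : ∀ v : Fin (2 * n), C (gs ms v) = v := fun v => congrFun hsolve v
  set v0 : Fin (2 * n) := ⟨0, hn0⟩ with hv0
  -- the predicate: vertex 0 holds a token that started in the right half
  have hPL : n ≤ (gs (ms.take L) v0).val := by
    rw [List.take_length]
    by_contra h
    push_neg at h
    have := hC1 (gs ms v0) h
    rw [hsol v0] at this
    simp [hv0] at this
    omega
  have hex : ∃ t, n ≤ (gs (ms.take t) v0).val := ⟨L, hPL⟩
  set T := Nat.find hex with hT
  have hTspec : n ≤ (gs (ms.take T) v0).val := Nat.find_spec hex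
  have hTL : T ≤ L := Nat.find_le hPL
  have hT0 : 0 < T := by
    rcases Nat.eq_zero_or_pos T with h | h
    · exfalso
      rw [h] at hTspec
      simp [gs, hv0] at hTspec
      omega
    · exact h
  -- facts about members of sublists
  have hinv_take : ∀ t, ∀ m ∈ ms.take t, Function.Involutive m :=
    fun t m hm => hinv m (List.take_subset t ms hm)
  have hlip_take : ∀ t, ∀ m ∈ ms.take t, ∀ v : Fin (2 * n),
      (m v).val ≤ v.val + 1 ∧ v.val ≤ (m v).val + 1 :=
    fun t m hm => hlip m (List.take_subset t ms hm)
  -- T ≥ n : the right-half token at vertex 0 travelled distance ≥ n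
  have hTn : n ≤ T := by
    have hback := foldl_gs (ms.take T) (hinv_take T) v0
    have hlb := foldl_lip (ms.take T) (hlip_take T) id (gs (ms.take T) v0)
    rw [hback] at hlb
    have hlen : (ms.take T).length = T := by
      rw [List.length_take]; omega
    have hv0val : v0.val = 0 := rfl
    simp only [id_eq, hlen] at hlb
    omega
  -- the step structure at time T
  set s := T - 1 with hs
  have hsT : s < T := by omega
  have hsL : s < L := by omega
  have hPs : ¬ n ≤ (gs (ms.take s) v0).val := Nat.find_min hex hsT
  push_neg at hPs
  set w : Fin (2 * n) := gs (ms.take s) v0 with hw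
  set mstar : Fin (2 * n) → Fin (2 * n) := ms.get ⟨s, hsL⟩ with hmstar
  have hmem : mstar ∈ ms := List.get_mem ms ⟨s, hsL⟩
  have htake : ms.take T = ms.take s ++ [mstar] := by
    have : T = s + 1 := by omega
    rw [this, List.take_succ, List.getElem?_eq_getElem hsL]
    rfl
  have hgt : gs (ms.take T) v0 = gs (ms.take s) (mstar v0) := by
    rw [htake, gs_append]
    rfl
  have hne : mstar v0 ≠ v0 := by
    intro h
    rw [h, ← hw] at hgt
    rw [hgt] at hTspec
    omega
  have hm1 : (mstar v0).val = 1 := by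
    rcases (hmatch mstar hmem).2 v0 with h | h
    · exact absurd h hne
    · rw [pathGraph, SimpleGraph.fromRel_adj] at h
      have hv0val : v0.val = 0 := rfl
      rcases h.2 with h' | h' <;> omega
  -- trajectory of the displaced left token w
  have hpw_s : (ms.take s).foldl (fun x m => m ∘ x) id w = v0 :=
    foldl_gs (ms.take s) (hinv_take s) v0
  have hpw_T : ((ms.take T).foldl (fun x m => m ∘ x) id) w = mstar v0 := by
    rw [htake, List.foldl_append]
    simp only [List.foldl_cons, List.foldl_nil, Function.comp_apply]
    rw [hpw_s]
  have hfinal : (ms.foldl (fun x m => m ∘ x) id) w = C w := by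
    have h1 := gs_foldl ms hinv id w
    have h2 := hsol ((ms.foldl (fun x m => m ∘ x) id) w)
    simp only [id_eq] at h1
    rw [h1] at h2
    exact h2.symm
  have hCw : (C w).val = w.val + n := hC1 w hPs
  -- Lipschitz from time T to the end
  have hsplit : ms = ms.take T ++ ms.drop T := (List.take_append_drop T ms).symm
  have hlip_drop : ∀ m ∈ ms.drop T, ∀ v : Fin (2 * n),
      (m v).val ≤ v.val + 1 ∧ v.val ≤ (m v).val + 1 :=
    fun m hm => hlip m (List.drop_subset T ms hm)
  have hlast := foldl_lip (ms.drop T) hlip_drop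
      ((ms.take T).foldl (fun x m => m ∘ x) id) w
  rw [← List.foldl_append] at hlast
  rw [← hsplit] at hlast
  rw [hfinal, hpw_T] at hlast
  have hdlen : (ms.drop T).length = L - T := by
    rw [List.length_drop]
  rw [hdlen, hCw, hm1] at hlast
  omega
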